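/- For all nonnegative integers t and n, d(4t+3, 4n) = d(2t+1, 2n) + 1 and d(4t+3, 4n+3) = d(2t+2, 2n+1) − 1, where d(t,n) = r(n+t) − r(n). -/

import Mathlib

/-- `r n` counts indices `j ≥ 0` with the `j`-th and `(j+1)`-st binary digits of `n` both `1`. -/
def r (n : ℕ) : ℕ :=
  ((Finset.range (n + 1)).filter (fun j => n.testBit j ∧ n.testBit (j + 1))).card

/-- `d t n = r (n + t) - r n` as an integer. -/
def d (t n : ℕ) : ℤ := (r (n + t) : ℤ) - (r n : ℤ)

lemma r_eq (n N : ℕ) (h : n + 1 ≤ N) :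
    r n = ∑ j ∈ Finset.range N, (if n.testBit j ∧ n.testBit (j + 1) then 1 else 0) := by
  rw [r, Finset.card_filter]
  apply Finset.sum_subset (Finset.range_subset_range.mpr h)
  intro j hj hnj
  have hle : n + 1 ≤ j := by
    by_contra hc
    exact hnj (Finset.mem_range.mpr (by omega))
  have hb : n.testBit j = false :=
    Nat.testBit_lt_two_pow (lt_of_lt_of_le (@Nat.lt_two_pow_self n)
      (Nat.pow_le_pow_right (by norm_num) (by omega)))
  simp [hb]

lemma r_two_mul (m : ℕ) : r (2 * m) = r m := by
  rw [r_eq (2 * m) (2 * m + 1 + 1) (by omega), Finset.sum_range_succ',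
    r_eq m (2 * m + 1) (by omega)]
  have h0 : (2 * m).testBit 0 = false := by
    simp [Nat.testBit_zero, Nat.mul_mod_right]
  have hs : ∀ j, (2 * m).testBit (j + 1) = m.testBit j := by
    intro j
    rw [Nat.testBit_add_one]
    congr 1
    omega
  simp [h0, hs]

lemma r_four_mul_add_three (m : ℕ) : r (4 * m + 3) = r (2 * m + 1) + 1 := by
  rw [r_eq (4 * m + 3) (4 * m + 3 + 1) (by omega), Finset.sum_range_succ',
    r_eq (2 * m + 1) (4 * m + 3) (by omega)]
  have h0 : (4 * m + 3).testBit 0 = true := by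
    simp [Nat.testBit_zero, Nat.add_mul_mod_self_left]
    omega
  have h1 : (4 * m + 3).testBit 1 = true := by
    rw [Nat.testBit_add_one]
    have : (4 * m + 3) / 2 = 2 * m + 1 := by omega
    rw [this]
    simp [Nat.testBit_zero]
  have hs : ∀ j, (4 * m + 3).testBit (j + 1) = (2 * m + 1).testBit j := by
    intro j
    rw [Nat.testBit_add_one]
    congr 1
    omega
  simp [h0, h1, hs]

theorem d_rec (t n : ℕ) :
    d (4 * t + 3) (4 * n) = d (2 * t + 1) (2 * n) + 1 ∧
    d (4 * t + 3) (4 * n + 3) = d (2 * t + 2) (2 * n + 1) - 1 := by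
  constructor
  · have e1 : 4 * n + (4 * t + 3) = 4 * (n + t) + 3 := by ring
    have e2 : 4 * n = 2 * (2 * n) := by ring
    have e3 : 2 * n + (2 * t + 1) = 2 * (n + t) + 1 := by ring
    rw [d, d, e1, e2, e3, r_four_mul_add_three, r_two_mul]
    push_cast
    ring
  · have e1 : 4 * n + 3 + (4 * t + 3) = 2 * (2 * (n + t + 1) + 1) := by ring
    have e2 : 2 * n + 1 + (2 * t + 2) = 2 * (n + t + 1) + 1 := by ring
    rw [d, d, e1, e2, r_two_mul, r_four_mul_add_three]
    push_cast
    ring
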